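/- Let m ≥ 1 and n ≥ 0 be integers. For k ∈ ℤ define d_k ∈ ℚ by d_k = Σ_{i=0}^{k} C(m+k−i−1, m−1)·C(n, i) if k ≥ 0 and d_k = 0 if k < 0. Then for every k ∈ ℤ: d_k + (−1)^{m−1}·d_{n−m−k} = (1/(m−1)!) · Σ_{i=0}^{n} ( ∏_{j=1}^{m−1} (k − i + j) ) · C(n, i), an identity in ℚ. -/

import Mathlib

open scoped BigOperators

/-- The specialization `𝖽_k = Σ_{i=0}^{k} C(m+k−i−1, m−1)·C(n, i)` of the complete
supersymmetric polynomial `𝐡_k` at `x_i = y_j = 1`, extended by `0` for `k < 0`. -/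
def dValue (m n : ℕ) (k : ℤ) : ℚ :=
  if k < 0 then 0
  else ∑ i ∈ Finset.range (k.toNat + 1),
    ((m + k.toNat - i - 1).choose (m - 1) : ℚ) * (n.choose i : ℚ)

lemma prodQ (M t : ℕ) :
    ∏ j ∈ Finset.range M, ((t : ℚ) + j + 1) =
      (M.factorial : ℚ) * ((t + M).choose M : ℚ) := by
  induction M with
  | zero => simp
  | succ M ih =>
    rw [Finset.prod_range_succ, ih]
    have h' : (t + M + 1) * ((t + M).choose M)
        = ((t + M + 1).choose (M + 1) * (M + 1)) := by
      exact Nat.add_one_mul_choose_eq (t+M) M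
    have hn : (M+1).factorial * ((t + (M+1)).choose (M+1))
        = M.factorial * ((t+M).choose M) * (t + M + 1) := by
      rw [Nat.factorial_succ, show t + (M+1) = t+M+1 from rfl]
      calc (M + 1) * M.factorial * ((t + M + 1).choose (M + 1))
          = M.factorial * ((t + M + 1).choose (M + 1) * (M + 1)) := by ring
        _ = M.factorial * ((t + M + 1) * ((t + M).choose M)) := by rw [← h']
        _ = M.factorial * ((t+M).choose M) * (t + M + 1) := by ring
    have := congrArg (fun x : ℕ => (x : ℚ)) hn
    push_cast at this ⊢
    linarith [this]

lemma termP (M : ℕ) (x : ℤ) :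
    ∏ j ∈ Finset.range M, ((x:ℚ) + j + 1)
    = (M.factorial : ℚ) *
      ((if 0 ≤ x then ((x.toNat + M).choose M : ℚ) else 0)
        + (-1:ℚ)^M * (if x + M + 1 ≤ 0 then (((-x-1).toNat).choose M : ℚ) else 0)) := by
  rcases le_or_gt 0 x with hx | hx
  · rw [if_pos hx, if_neg (by omega)]
    have hc : (x:ℚ) = (x.toNat : ℚ) := by exact_mod_cast congrArg (Int.cast : ℤ → ℚ) (Int.toNat_of_nonneg hx).symm
    rw [hc, prodQ]; ring
  · rcases le_or_gt (x + M + 1) 0 with hx2 | hx2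
    · rw [if_neg (by omega), if_pos hx2]
      set t : ℕ := (-x - (M+1)).toNat with ht
      have htz : (t : ℤ) = -x - M - 1 := by omega
      have key : ∀ j ∈ Finset.range M, (x:ℚ) + j + 1 = -(((t:ℚ) + ((M - 1 - j : ℕ) : ℚ)) + 1) := by
        intro j hj
        simp only [Finset.mem_range] at hj
        have h1 : ((M - 1 - j : ℕ) : ℤ) = (M : ℤ) - 1 - j := by omega
        have : (x : ℤ) + j + 1 = -(((t:ℤ) + ((M - 1 - j : ℕ) : ℤ)) + 1) := by omega
        exact_mod_cast congrArg (Int.cast : ℤ → ℚ) this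
      rw [Finset.prod_congr rfl key]
      have : ∏ j ∈ Finset.range M, (-(((t:ℚ) + ((M - 1 - j : ℕ) : ℚ)) + 1))
          = (-1:ℚ)^M * ∏ j ∈ Finset.range M, (((t:ℚ) + ((M - 1 - j : ℕ) : ℚ)) + 1) := by
        calc ∏ j ∈ Finset.range M, (-(((t:ℚ) + ((M - 1 - j : ℕ) : ℚ)) + 1))
            = ∏ j ∈ Finset.range M, ((-1:ℚ) * (((t:ℚ) + ((M - 1 - j : ℕ) : ℚ)) + 1)) :=
              Finset.prod_congr rfl (fun j _ => by ring)
          _ = (∏ _j ∈ Finset.range M, (-1:ℚ)) * ∏ j ∈ Finset.range M, (((t:ℚ) + ((M - 1 - j : ℕ) : ℚ)) + 1) :=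
              Finset.prod_mul_distrib
          _ = (-1:ℚ)^M * ∏ j ∈ Finset.range M, (((t:ℚ) + ((M - 1 - j : ℕ) : ℚ)) + 1) := by
              rw [Finset.prod_const, Finset.card_range]
      rw [this, Finset.prod_range_reflect (fun j => ((t:ℚ) + (j : ℚ)) + 1) M]
      have hp : ∏ j ∈ Finset.range M, (((t:ℚ) + (j : ℚ)) + 1)
          = (M.factorial : ℚ) * ((t + M).choose M : ℚ) := by
        exact prodQ M t
      rw [hp]
      have : t + M = (-x-1).toNat := by omega
      rw [this]; ring
    · rw [if_neg (by omega), if_neg (by omega)]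
      have hj0 : (-x-1).toNat ∈ Finset.range M := by
        simp only [Finset.mem_range]; omega
      rw [Finset.prod_eq_zero hj0]
      · ring
      · have : (x : ℤ) + ((-x-1).toNat : ℤ) + 1 = 0 := by omega
        exact_mod_cast congrArg (Int.cast : ℤ → ℚ) this

lemma sumA (m n : ℕ) (hm : 1 ≤ m) (k : ℤ) :
    ∑ i ∈ Finset.range (n+1),
      (if 0 ≤ k - (i:ℤ) then (((k - (i:ℤ)).toNat + (m-1)).choose (m-1) : ℚ) else 0) * (n.choose i : ℚ)
    = dValue m n k := by
  by_cases hk : k < 0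
  · rw [dValue, if_pos hk]
    apply Finset.sum_eq_zero
    intro i _
    rw [if_neg (by omega), zero_mul]
  · rw [dValue, if_neg hk]
    set N := max n k.toNat with hN
    have e1 : (∑ i ∈ Finset.range (n+1),
        (if 0 ≤ k - (i:ℤ) then (((k - (i:ℤ)).toNat + (m-1)).choose (m-1) : ℚ) else 0) * (n.choose i : ℚ))
        = ∑ i ∈ Finset.range (N+1),
        (if 0 ≤ k - (i:ℤ) then (((k - (i:ℤ)).toNat + (m-1)).choose (m-1) : ℚ) else 0) * (n.choose i : ℚ) := by
      apply Finset.sum_subset (Finset.range_subset_range.mpr (by omega))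
      intro i _ hi
      simp only [Finset.mem_range, not_lt] at hi
      have hz : n.choose i = 0 := Nat.choose_eq_zero_of_lt (by omega)
      rw [hz, Nat.cast_zero, mul_zero]
    have e2 : (∑ i ∈ Finset.range (k.toNat+1),
        ((m + k.toNat - i - 1).choose (m-1) : ℚ) * (n.choose i : ℚ))
        = ∑ i ∈ Finset.range (N+1),
        (if 0 ≤ k - (i:ℤ) then (((k - (i:ℤ)).toNat + (m-1)).choose (m-1) : ℚ) else 0) * (n.choose i : ℚ) := by
      have hc : ∀ i ∈ Finset.range (k.toNat+1),
          ((m + k.toNat - i - 1).choose (m-1) : ℚ) * (n.choose i : ℚ)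
          = (if 0 ≤ k - (i:ℤ) then (((k - (i:ℤ)).toNat + (m-1)).choose (m-1) : ℚ) else 0) * (n.choose i : ℚ) := by
        intro i hi
        simp only [Finset.mem_range] at hi
        rw [if_pos (by omega)]
        have : (k - (i:ℤ)).toNat + (m-1) = m + k.toNat - i - 1 := by omega
        rw [this]
      rw [Finset.sum_congr rfl hc]
      apply Finset.sum_subset (Finset.range_subset_range.mpr (by omega))
      intro i _ hi
      simp only [Finset.mem_range, not_lt] at hi
      rw [if_neg (by omega), zero_mul]
    rw [e1, ← e2]

lemma sumB (m n : ℕ) (hm : 1 ≤ m) (k : ℤ) :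
    ∑ i ∈ Finset.range (n+1),
      (if k - (i:ℤ) + (m-1 : ℕ) + 1 ≤ 0 then ((-(k - (i:ℤ)) - 1).toNat.choose (m-1) : ℚ) else 0) * (n.choose i : ℚ)
    = dValue m n ((n:ℤ) - m - k) := by
  rw [← sumA m n hm ((n:ℤ) - m - k)]
  rw [← Finset.sum_range_reflect]
  apply Finset.sum_congr rfl
  intro i hi
  simp only [Finset.mem_range] at hi
  have hin : i ≤ n := by omega
  simp only [Nat.add_sub_cancel]
  rw [Nat.choose_symm hin]
  have hcast : ((n - i : ℕ) : ℤ) = (n : ℤ) - (i : ℤ) := by omega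
  by_cases h : 0 ≤ (n:ℤ) - m - k - (i:ℤ)
  · rw [if_pos (by omega), if_pos h]
    have : (-(k - ((n - i : ℕ):ℤ)) - 1).toNat = ((n:ℤ) - m - k - (i:ℤ)).toNat + (m-1) := by omega
    rw [this]
  · rw [if_neg (by omega), if_neg h]



/-- Lemma 7.5 of the paper: for `m ≥ 1` and all `k ∈ ℤ`,
`𝖽_k + (−1)^{m−1}·𝖽_{n−m−k} = (1/(m−1)!)·Σ_{i=0}^{n} (∏_{j=1}^{m−1} (k−i+j))·C(n,i)`. -/
theorem dValue_add_sign_mul_dValue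
    (m n : ℕ) (hm : 1 ≤ m) (k : ℤ) :
    dValue m n k + (-1 : ℚ) ^ (m - 1) * dValue m n ((n : ℤ) - m - k) =
      (1 / ((m - 1).factorial : ℚ)) *
        ∑ i ∈ Finset.range (n + 1),
          (∏ j ∈ Finset.range (m - 1), ((k : ℚ) - (i : ℚ) + ((j : ℚ) + 1))) *
            (n.choose i : ℚ) := by
  have hfac : (((m-1).factorial : ℕ) : ℚ) ≠ 0 := Nat.cast_ne_zero.mpr (Nat.factorial_ne_zero _)
  have key : ∑ i ∈ Finset.range (n + 1),
      (∏ j ∈ Finset.range (m - 1), ((k : ℚ) - (i : ℚ) + ((j : ℚ) + 1))) * (n.choose i : ℚ)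
      = ((m-1).factorial : ℚ) *
        (dValue m n k + (-1 : ℚ) ^ (m - 1) * dValue m n ((n : ℤ) - m - k)) := by
    have e : ∀ i ∈ Finset.range (n+1),
        (∏ j ∈ Finset.range (m - 1), ((k : ℚ) - (i : ℚ) + ((j : ℚ) + 1))) * (n.choose i : ℚ)
        = ((m-1).factorial : ℚ) *
          ((if 0 ≤ k - (i:ℤ) then (((k - (i:ℤ)).toNat + (m-1)).choose (m-1) : ℚ) else 0) * (n.choose i : ℚ)
            + (-1:ℚ)^(m-1) *
              ((if k - (i:ℤ) + (m-1 : ℕ) + 1 ≤ 0 then ((-(k - (i:ℤ)) - 1).toNat.choose (m-1) : ℚ) else 0) * (n.choose i : ℚ))) := by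
      intro i hi
      have hp : ∏ j ∈ Finset.range (m - 1), ((k : ℚ) - (i : ℚ) + ((j : ℚ) + 1))
          = ∏ j ∈ Finset.range (m - 1), (((k - (i:ℤ) : ℤ):ℚ) + j + 1) :=
        Finset.prod_congr rfl (fun j _ => by push_cast; ring)
      rw [hp, termP (m-1) (k - (i:ℤ))]
      ring
    rw [Finset.sum_congr rfl e, ← Finset.mul_sum, Finset.sum_add_distrib, sumA m n hm k,
      ← Finset.mul_sum, sumB m n hm k]
  rw [key]
  field_simp
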